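/- Let G be a finitely generated group possessing a finite symmetric generating system S_0 that is minimal (no proper subset of S_0 generates G) and such that every s ∈ S_0 has order 2 (s² = e). Then every bijection φ: G → G that is an isometry of (G, d_S) for every finite symmetric generating system S of G is a left translation x ↦ c·x for some c ∈ G; consequently the group of all such shared isometries is isomorphic to G. -/

import Mathlib

/-! Common definitions: word metrics, quasi-isometries, rough isometries. -/

/-- `g` is a product of `n` elements of `S ∪ S⁻¹`. -/
def IsWordProd {G : Type*} [Group G] (S : Set G) (g : G) (n : ℕ) : Prop :=
  ∃ l : List G, l.length = n ∧ (∀ s ∈ l, s ∈ S ∪ S⁻¹) ∧ l.prod = g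

/-- The word metric associated to a generating system `S`: the least `n` such that
`x⁻¹ * y` is a product of `n` elements of `S ∪ S⁻¹`. -/
noncomputable def wdist {G : Type*} [Group G] (S : Set G) (x y : G) : ℕ :=
  sInf {n | IsWordProd S (x⁻¹ * y) n}

/-- The word norm `‖g‖_S = d_S(e, g)`. -/
noncomputable def wnorm {G : Type*} [Group G] (S : Set G) (g : G) : ℕ :=
  wdist S 1 g

/-- `(η, η')` is a `(lam, eps)`-quasi-isometry between `(X, dX)` and `(Y, dY)`. -/
def IsQIPair {X Y : Type*} (dX : X → X → ℝ) (dY : Y → Y → ℝ)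
    (η : X → Y) (η' : Y → X) (lam eps : ℝ) : Prop :=
  (∀ x x' : X, lam⁻¹ * dX x x' - eps ≤ dY (η x) (η x') ∧
      dY (η x) (η x') ≤ lam * dX x x' + eps) ∧
  (∀ y y' : Y, lam⁻¹ * dY y y' - eps ≤ dX (η' y) (η' y') ∧
      dX (η' y) (η' y') ≤ lam * dY y y' + eps) ∧
  (∀ y : Y, dY (η (η' y)) y ≤ eps) ∧
  (∀ x : X, dX (η' (η x)) x ≤ eps)

/-- `(η, η')` is an `eps`-isometry between `(X, dX)` and `(Y, dY)`. -/
def IsEpsIsomPair {X Y : Type*} (dX : X → X → ℝ) (dY : Y → Y → ℝ)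
    (η : X → Y) (η' : Y → X) (eps : ℝ) : Prop :=
  (∀ x x' : X, |dX x x' - dY (η x) (η x')| ≤ eps) ∧
  (∀ y y' : Y, |dY y y' - dX (η' y) (η' y')| ≤ eps) ∧
  (∀ y : Y, dY (η (η' y)) y ≤ eps) ∧
  (∀ x : X, dX (η' (η x)) x ≤ eps)

/-- The real-valued word metric. -/
noncomputable def wdistR {G : Type*} [Group G] (S : Set G) (x y : G) : ℝ :=
  (wdist S x y : ℝ)

/-- The group (under composition) of bijections of `G` preserving the distance `d S`
for every generating system `S` in the family `𝒮`, as a subgroup of `Equiv.Perm G`. -/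
def sharedIsomGroup {G : Type*} [Group G] (𝒮 : Set (Set G))
    (d : Set G → G → G → ℕ) : Subgroup (Equiv.Perm G) where
  carrier := {φ : Equiv.Perm G | ∀ S ∈ 𝒮, ∀ x y : G, d S (φ x) (φ y) = d S x y}
  one_mem' := fun S _ x y => rfl
  mul_mem' := by
    intro a b ha hb S hS x y
    rw [Equiv.Perm.mul_apply, Equiv.Perm.mul_apply, ha S hS, hb S hS]
  inv_mem' := by
    intro a ha S hS x y
    have h := ha S hS (a⁻¹ x) (a⁻¹ y)
    rw [← Equiv.Perm.mul_apply, ← Equiv.Perm.mul_apply, mul_inv_cancel, Equiv.Perm.one_apply,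
      Equiv.Perm.one_apply] at h
    exact h.symm

/-- The family of all finite symmetric generating systems of `G`. -/
def symGenFamily (G : Type*) [Group G] : Set (Set G) :=
  {S : Set G | S.Finite ∧ S⁻¹ = S ∧ Subgroup.closure S = ⊤}

section SharedIsomAux
variable {G : Type*} [Group G]

lemma isWordProd_single {S : Set G} {a : G} (ha : a ∈ S ∪ S⁻¹) : IsWordProd S a 1 :=
  ⟨[a], rfl, by simpa using ha, by simp⟩

lemma isWordProd_mul {S : Set G} {a b : G} {m n : ℕ}
    (ha : IsWordProd S a m) (hb : IsWordProd S b n) : IsWordProd S (a * b) (m + n) := by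
  obtain ⟨l1, h1, h1m, h1p⟩ := ha
  obtain ⟨l2, h2, h2m, h2p⟩ := hb
  refine ⟨l1 ++ l2, by simp [h1, h2], ?_, by simp [List.prod_append, h1p, h2p]⟩
  intro s hs
  rcases List.mem_append.1 hs with h | h
  exacts [h1m s h, h2m s h]

lemma exists_word {S : Set G} (hgen : Subgroup.closure S = ⊤) (g : G) :
    ∃ n, IsWordProd S g n := by
  have hg : g ∈ Subgroup.closure S := hgen ▸ Subgroup.mem_top g
  induction hg using Subgroup.closure_induction with
  | mem x hx => exact ⟨1, isWordProd_single (Or.inl hx)⟩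
  | one => exact ⟨0, [], rfl, by simp, by simp⟩
  | mul x y hx hy ihx ihy =>
    obtain ⟨m, hm⟩ := ihx; obtain ⟨n, hn⟩ := ihy
    exact ⟨m + n, isWordProd_mul hm hn⟩
  | inv x hx ih =>
    obtain ⟨n, l, hl, hm, hp⟩ := ih
    refine ⟨n, (l.map fun x => x⁻¹).reverse, by simp [hl], ?_, by
      rw [← List.prod_inv_reverse, hp]⟩
    intro s hs
    simp only [List.mem_reverse, List.mem_map] at hs
    obtain ⟨t, ht, rfl⟩ := hs
    rcases hm t ht with h | h
    · exact Or.inr (by simpa using h)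
    · exact Or.inl (by simpa using h)

lemma wdist_le {S : Set G} {x y : G} {n : ℕ} (h : IsWordProd S (x⁻¹ * y) n) :
    wdist S x y ≤ n := Nat.sInf_le h

lemma wdist_spec {S : Set G} (hgen : Subgroup.closure S = ⊤) (x y : G) :
    IsWordProd S (x⁻¹ * y) (wdist S x y) :=
  Nat.sInf_mem (exists_word hgen (x⁻¹ * y))

lemma eq_of_wdist_eq_zero {S : Set G} (hgen : Subgroup.closure S = ⊤) {x y : G}
    (h : wdist S x y = 0) : x = y := by
  have hs := wdist_spec hgen x y
  rw [h] at hs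
  obtain ⟨l, hl, -, hp⟩ := hs
  rw [List.length_eq_zero_iff.1 hl] at hp
  simp only [List.prod_nil] at hp
  have : x⁻¹ * y = 1 := hp.symm
  rw [inv_mul_eq_one] at this; exact this

lemma mem_of_wdist_eq_one {S : Set G} (hgen : Subgroup.closure S = ⊤) {x y : G}
    (h : wdist S x y = 1) : x⁻¹ * y ∈ S ∪ S⁻¹ := by
  have hs := wdist_spec hgen x y
  rw [h] at hs
  obtain ⟨l, hl, hm, hp⟩ := hs
  obtain ⟨a, rfl⟩ := List.length_eq_one_iff.1 hl
  have := hm a (by simp)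
  simpa [← hp] using this

lemma wdist_eq_one {S : Set G} (hgen : Subgroup.closure S = ⊤) {x y : G}
    (hne : x ≠ y) (hmem : x⁻¹ * y ∈ S ∪ S⁻¹) : wdist S x y = 1 := by
  have h1 : wdist S x y ≤ 1 := wdist_le (isWordProd_single hmem)
  have h0 : wdist S x y ≠ 0 := fun h => hne (eq_of_wdist_eq_zero hgen h)
  omega

lemma wdist_mul_left (S : Set G) (g x y : G) : wdist S (g * x) (g * y) = wdist S x y := by
  have h : (g * x)⁻¹ * (g * y) = x⁻¹ * y := by group
  simp only [wdist, h]



end SharedIsomAux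

section SharedIsomCore
variable {G : Type*} [Group G]

lemma pair_lemma (S₀ : Set G) (hfin : S₀.Finite) (hsym : S₀⁻¹ = S₀)
    (hgen : Subgroup.closure S₀ = ⊤) {ψ : G → G}
    (hiso : ∀ S : Set G, S.Finite → S⁻¹ = S → Subgroup.closure S = ⊤ →
      ∀ x y : G, wdist S (ψ x) (ψ y) = wdist S x y)
    {a b : G} (hab : a ≠ b) :
    (ψ a)⁻¹ * ψ b ∈ S₀ ∨ (ψ a)⁻¹ * ψ b = a⁻¹ * b ∨ (ψ a)⁻¹ * ψ b = (a⁻¹ * b)⁻¹ := by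
  set c := a⁻¹ * b with hc
  set S : Set G := S₀ ∪ {c, c⁻¹} with hS
  have hmemS₀ : ∀ x : G, x ∈ S₀ ↔ x⁻¹ ∈ S₀ := by
    intro x
    constructor
    · intro h; rw [← hsym]; simpa using h
    · intro h; rw [← hsym]; simpa using h
  have hSsym : S⁻¹ = S := by
    ext x
    simp only [hS, Set.mem_inv, Set.mem_union, Set.mem_insert_iff, Set.mem_singleton_iff]
    constructor
    · rintro (h | h | h)
      · exact Or.inl ((hmemS₀ x).2 h)
      · exact Or.inr (Or.inr (by rw [inv_eq_iff_eq_inv] at h; rw [h]))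
      · exact Or.inr (Or.inl (inv_inj.1 h))
    · rintro (h | h | h)
      · exact Or.inl ((hmemS₀ x).1 h)
      · exact Or.inr (Or.inr (by rw [h]))
      · exact Or.inr (Or.inl (by rw [h, inv_inv]))
  have hSfin : S.Finite := hfin.union (by
    have : ({c, c⁻¹} : Set G).Finite := (Set.finite_singleton c⁻¹).insert c
    exact this)
  have hSgen : Subgroup.closure S = ⊤ := by
    rw [eq_top_iff, ← hgen]
    exact Subgroup.closure_mono Set.subset_union_left
  have hcS : c ∈ S ∪ S⁻¹ := Or.inl (Or.inr (Or.inl rfl))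
  have h1 : wdist S a b = 1 := wdist_eq_one hSgen hab hcS
  have h2 : wdist S (ψ a) (ψ b) = 1 := by rw [hiso S hSfin hSsym hSgen a b]; exact h1
  have h3 := mem_of_wdist_eq_one hSgen h2
  rw [hSsym, Set.union_self] at h3
  rcases h3 with h | h | h
  · exact Or.inl h
  · exact Or.inr (Or.inl h)
  · exact Or.inr (Or.inr h)


lemma redundant_gen {S₀ : Set G} (hgen : Subgroup.closure S₀ = ⊤)
    (hmin : ∀ T : Set G, T ⊂ S₀ → Subgroup.closure T ≠ ⊤) {q r : G} (hq : q ∈ S₀)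
    (heq : q = r) (hr : r ∈ Subgroup.closure (S₀ \ {q})) : False := by
  subst heq
  refine hmin (S₀ \ {q}) ⟨Set.diff_subset, fun hsub => (hsub hq).2 rfl⟩ ?_
  rw [eq_top_iff, ← hgen]
  refine (Subgroup.closure_le _).2 ?_
  intro s hs
  by_cases hsq : s = q
  · rw [hsq]; exact SetLike.mem_coe.2 hr
  · exact Subgroup.subset_closure ⟨hs, hsq⟩

lemma core_fix (S₀ : Set G) (hfin : S₀.Finite) (hsym : S₀⁻¹ = S₀)
    (hgen : Subgroup.closure S₀ = ⊤)
    (hmin : ∀ T : Set G, T ⊂ S₀ → Subgroup.closure T ≠ ⊤)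
    (hord : ∀ s ∈ S₀, s * s = 1)
    {ψ : G → G} (hbij : Function.Bijective ψ) (hψ1 : ψ 1 = 1)
    (hiso : ∀ S : Set G, S.Finite → S⁻¹ = S → Subgroup.closure S = ⊤ →
      ∀ x y : G, wdist S (ψ x) (ψ y) = wdist S x y) :
    ∀ x : G, ψ x = x := by
  have hinj := hbij.injective
  have hinv' : ∀ s ∈ S₀, s⁻¹ = s := fun s hs =>
    inv_eq_of_mul_eq_one_left (hord s hs)
  -- 1 ∉ S₀
  have hone : (1 : G) ∉ S₀ := by
    intro h1
    refine hmin (S₀ \ {1}) ⟨Set.diff_subset, fun hsub => (hsub h1).2 rfl⟩ ?_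
    rw [eq_top_iff, ← hgen]
    refine (Subgroup.closure_le _).2 ?_
    intro s hs
    by_cases h : s = 1
    · subst h; exact SetLike.mem_coe.2 (Subgroup.one_mem _)
    · exact Subgroup.subset_closure ⟨hs, h⟩
  -- word length helper
  have hword : ∀ l : List G, (∀ s ∈ l, s ∈ S₀) → wdist S₀ 1 l.prod ≤ l.length := by
    intro l hl
    apply wdist_le
    exact ⟨l, rfl, fun s hs => Or.inl (hl s hs), by simp⟩
  have hmemnorm : ∀ u ∈ S₀, wdist S₀ 1 u ≤ 1 := by
    intro u hu
    have := hword [u] (by simpa using hu)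
    simpa using this
  -- step 2: ψ maps S₀ into S₀
  have hUU : ∀ u ∈ S₀, ψ u ∈ S₀ := by
    intro u hu
    have hne : (1 : G) ≠ u := fun h => hone (h ▸ hu)
    rcases pair_lemma S₀ hfin hsym hgen hiso hne with h | h | h
    · rwa [hψ1, inv_one, one_mul] at h
    · rw [hψ1, inv_one, one_mul] at h; rw [h]; simpa using hu
    · rw [hψ1, inv_one, one_mul] at h; rw [h]
      simpa [hinv' u hu] using hu
  -- step 3: ψ fixes S₀ pointwise
  have hUfix : ∀ u ∈ S₀, ψ u = u := by
    intro u hu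
    by_contra hneq
    set t := ψ u with htdef
    have htS : t ∈ S₀ := hUU u hu
    have htu : t ≠ u := fun h => hneq h
    -- build S'
    set V : Set G := S₀ \ {u} with hV
    have htV : t ∈ V := ⟨htS, htu⟩
    set S' : Set G := V ∪ (fun w => u * w) '' V ∪ (fun w => w * u) '' V with hS'
    have hVfin : V.Finite := hfin.diff
    have hS'fin : S'.Finite := ((hVfin.union (hVfin.image _)).union (hVfin.image _))
    have hVS₀ : V ⊆ S₀ := Set.diff_subset
    have hVinv : ∀ w ∈ V, w⁻¹ = w := fun w hw => hinv' w (hVS₀ hw)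
    have huinv : u⁻¹ = u := hinv' u hu
    have hS'sym : S'⁻¹ = S' := by
      ext x
      simp only [hS', Set.mem_inv, Set.mem_union, Set.mem_image]
      constructor
      · rintro ((h | ⟨w, hw, hwx⟩) | ⟨w, hw, hwx⟩)
        · left; left
          have hx : x⁻¹ ∈ V := h
          have := hVinv _ hx
          rw [← inv_inv x, this]; exact hx
        · right
          refine ⟨w, hw, ?_⟩
          have : x = (u * w)⁻¹ := by rw [hwx, inv_inv]
          rw [this, mul_inv_rev, huinv, hVinv w hw]
        · left; right
          refine ⟨w, hw, ?_⟩
          have : x = (w * u)⁻¹ := by rw [hwx, inv_inv]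
          rw [this, mul_inv_rev, huinv, hVinv w hw]
      · rintro ((h | ⟨w, hw, hwx⟩) | ⟨w, hw, hwx⟩)
        · left; left; show x⁻¹ ∈ V
          rw [hVinv _ h]; exact h
        · right
          refine ⟨w, hw, ?_⟩
          show w * u = x⁻¹
          rw [← hwx]
          show w * u = (u * w)⁻¹
          rw [mul_inv_rev, huinv, hVinv w hw]
        · left; right
          refine ⟨w, hw, ?_⟩
          show u * w = x⁻¹
          rw [← hwx]
          show u * w = (w * u)⁻¹
          rw [mul_inv_rev, huinv, hVinv w hw]
    have hS'gen : Subgroup.closure S' = ⊤ := by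
      rw [eq_top_iff, ← hgen]
      refine (Subgroup.closure_le _).2 ?_
      intro s hs
      by_cases hsu : s = u
      · have h1 : s * t ∈ S' := by rw [hsu]; exact Or.inl (Or.inr ⟨t, htV, rfl⟩)
        have h2 : t ∈ S' := Or.inl (Or.inl htV)
        have hs' : s = (s * t) * t⁻¹ := by group
        rw [hs']
        exact SetLike.mem_coe.2 (mul_mem (Subgroup.subset_closure h1)
          (inv_mem (Subgroup.subset_closure h2)))
      · exact Subgroup.subset_closure (Or.inl (Or.inl ⟨hs, hsu⟩))
    have huS' : u ∉ S' := by
      rintro ((h | ⟨w, hw, hwx⟩) | ⟨w, hw, hwx⟩)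
      · exact h.2 rfl
      · have hwx' : u * w = u := hwx
        have : w = 1 := by
          apply mul_left_cancel (a := u)
          rw [mul_one]; exact hwx'
        exact hone (this ▸ hVS₀ hw)
      · have hwx' : w * u = u := hwx
        have : w = 1 := by
          apply mul_right_cancel (b := u)
          rw [one_mul]; exact hwx'
        exact hone (this ▸ hVS₀ hw)
    have htS' : t ∈ S' := Or.inl (Or.inl htV)
    have hd : wdist S' 1 t = wdist S' 1 u := by
      have := hiso S' hS'fin hS'sym hS'gen 1 u
      rwa [hψ1, ← htdef] at this
    have ht1 : wdist S' 1 t ≤ 1 := wdist_le (isWordProd_single (by simpa using Or.inl htS'))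
    interval_cases h : wdist S' 1 t
    · have h1u : (1 : G) = u := eq_of_wdist_eq_zero hS'gen hd.symm
      exact hone (h1u ▸ hu)
    · have hm := mem_of_wdist_eq_one hS'gen hd.symm
      rw [hS'sym, Set.union_self] at hm
      simp only [inv_one, one_mul] at hm
      exact huS' hm
  -- main strong induction on the word norm
  have main : ∀ m : ℕ, ∀ x : G, wdist S₀ 1 x = m → ψ x = x := by
    intro m
    induction m using Nat.strong_induction_on with
    | _ m IH =>
      intro x hx
      rcases m with _ | (_ | (_ | n))
      · have h1x : (1 : G) = x := eq_of_wdist_eq_zero hgen hx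
        rw [← h1x, hψ1]
      · have hm := mem_of_wdist_eq_one hgen hx
        rw [hsym, Set.union_self] at hm
        simp only [inv_one, one_mul] at hm
        exact hUfix x hm
      · -- norm exactly 2
        by_contra hne
        have hx1 : x ≠ 1 := by rintro rfl; exact hne hψ1
        have hxU : x ∉ S₀ := fun h => hne (hUfix x h)
        have hpsix : ψ x = x⁻¹ := by
          rcases pair_lemma S₀ hfin hsym hgen hiso (Ne.symm hx1) with h | h | h
          · simp only [hψ1, inv_one, one_mul] at h
            have ht : ψ (ψ x) = ψ x := hUfix _ h
            exact absurd (hinj ht) hne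
          · simp only [hψ1, inv_one, one_mul] at h
            exact absurd h hne
          · simp only [hψ1, inv_one, one_mul] at h
            exact h
        have hxx : x⁻¹ ≠ x := by
          intro h
          exact hne (by rw [hpsix, h])
        -- decompose x = a * b with a b ∈ S₀
        obtain ⟨l, hl, hlm, hlp⟩ := wdist_spec hgen 1 x
        rw [hx] at hl
        obtain ⟨a, b, rfl⟩ := List.length_eq_two.1 hl
        have haS : a ∈ S₀ := by
          rcases hlm a (by simp) with h | h
          · exact h
          · rw [← hsym]; exact h
        have hbS : b ∈ S₀ := by
          rcases hlm b (by simp) with h | h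
          · exact h
          · rw [← hsym]; exact h
        have hxab : x = a * b := by
          have := hlp
          simp only [List.prod_cons, List.prod_nil, mul_one, inv_one, one_mul] at this
          exact this.symm
        have hax : a ≠ x := by
          intro h
          have hb1 : b = 1 := by
            have : a * b = a * 1 := by rw [mul_one, ← hxab, h]
            exact mul_left_cancel this
          exact hone (hb1 ▸ hbS)
        rcases pair_lemma S₀ hfin hsym hgen hiso hax with h | h | h
        · rw [hUfix a haS, hpsix] at h
          set q := a⁻¹ * x⁻¹ with hqdef
          have hqS : q ∈ S₀ := h
          have hxinv : x⁻¹ = a * q := by rw [hqdef]; group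
          have hxeq2 : x = q * a := by
            rw [← inv_inv x, hxinv, mul_inv_rev, hinv' q hqS, hinv' a haS]
          by_cases hqa : q = a
          · -- x = a * a = 1, contradiction
            apply hx1
            rw [hxeq2, hqa, hord a haS]
          · by_cases hqb : q = b
            · -- x = b * a and x = a * b, so x * x = 1
              apply hxx
              have hxx1 : x * x = 1 := by
                rw [show x * x = x * x by rfl]
                nth_rewrite 1 [hxab]
                rw [hxeq2, hqb, show a * b * (b * a) = a * ((b * b) * a) by group,
                  hord b hbS, one_mul, hord a haS]
              exact inv_eq_of_mul_eq_one_left hxx1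
            · -- minimality contradiction
              have hqexp : q = a * (b * a) := by
                rw [hqdef, hxab, mul_inv_rev, hinv' a haS, hinv' b hbS]
              have h1m : a ∈ S₀ \ {q} := ⟨haS, fun hh => hqa (by rw [hh])⟩
              have h2m : b ∈ S₀ \ {q} := ⟨hbS, fun hh => hqb (by rw [hh])⟩
              exact redundant_gen hgen hmin hqS hqexp
                (mul_mem (Subgroup.subset_closure h1m)
                  (mul_mem (Subgroup.subset_closure h2m) (Subgroup.subset_closure h1m)))
        · rw [hUfix a haS, hpsix] at h
          exact absurd (mul_left_cancel h) hxx
        · rw [hUfix a haS, hpsix] at h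
          -- h : a⁻¹ * x⁻¹ = (a⁻¹ * x)⁻¹ ; but a⁻¹ * x = b
          apply hxx
          have hb' : a⁻¹ * x = b := by rw [hxab, ← mul_assoc, hinv' a haS, hord a haS, one_mul]
          rw [hb'] at h
          have : x⁻¹ = a * b⁻¹ := by rw [← h]; group
          rw [this, hinv' b hbS, ← hxab]
      · -- norm n + 3 ≥ 3
        by_contra hne
        have hx1 : x ≠ 1 := by rintro rfl; exact hne hψ1
        have hxU : x ∉ S₀ := fun h => hne (hUfix x h)
        have hpsix : ψ x = x⁻¹ := by
          rcases pair_lemma S₀ hfin hsym hgen hiso (Ne.symm hx1) with h | h | h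
          · simp only [hψ1, inv_one, one_mul] at h
            have ht : ψ (ψ x) = ψ x := hUfix _ h
            exact absurd (hinj ht) hne
          · simp only [hψ1, inv_one, one_mul] at h
            exact absurd h hne
          · simp only [hψ1, inv_one, one_mul] at h
            exact h
        have hxx : x⁻¹ ≠ x := by
          intro h
          exact hne (by rw [hpsix, h])
        -- x commutes with every generator
        have hcent : ∀ u ∈ S₀, x * u = u * x := by
          intro u hu
          have hux : u ≠ x := fun h => hxU (h ▸ hu)
          rcases pair_lemma S₀ hfin hsym hgen hiso hux with h | h | h
          · rw [hUfix u hu, hpsix] at h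
            exfalso
            set t := u⁻¹ * x⁻¹ with htdef
            have hxeq : x = t * u := by
              have h5 : u * t = x⁻¹ := by rw [htdef]; group
              rw [← inv_inv x, ← h5, mul_inv_rev, hinv' t h, hinv' u hu]
            have hle : wdist S₀ 1 x ≤ 2 := by
              have h6 := hword [t, u] (by
                intro s hs; simp at hs; rcases hs with rfl | rfl; exacts [h, hu])
              simpa [← hxeq] using h6
            omega
          · rw [hUfix u hu, hpsix] at h
            exact absurd (mul_left_cancel h) hxx
          · rw [hUfix u hu, hpsix] at h
            have h7 := congrArg (fun z => z⁻¹) h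
            simp only [mul_inv_rev, inv_inv] at h7
            rw [hinv' u hu] at h7
            exact h7
        by_cases hab : ∀ u ∈ S₀, ∀ v ∈ S₀, u * v = v * u
        · -- abelian case: exponent two, contradiction with x⁻¹ ≠ x
          have h1 : ∀ u ∈ S₀, ∀ g : G, u * g = g * u := by
            intro u hu g
            have hle : Subgroup.closure S₀ ≤ Subgroup.centralizer {u} := by
              refine (Subgroup.closure_le _).2 ?_
              intro w hw
              rw [SetLike.mem_coe, Subgroup.mem_centralizer_iff]
              rintro z hz
              rw [Set.mem_singleton_iff] at hz
              rw [hz]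
              exact hab u hu w hw
            have hg : g ∈ Subgroup.centralizer {u} := hle (by rw [hgen]; trivial)
            exact Subgroup.mem_centralizer_iff.1 hg u rfl
          have h2 : ∀ g k : G, g * k = k * g := by
            intro g k
            have hle : Subgroup.closure S₀ ≤ Subgroup.centralizer {g} := by
              refine (Subgroup.closure_le _).2 ?_
              intro w hw
              rw [SetLike.mem_coe, Subgroup.mem_centralizer_iff]
              rintro z hz
              rw [Set.mem_singleton_iff] at hz
              rw [hz]
              exact (h1 w hw g).symm
            have hk : k ∈ Subgroup.centralizer {g} := hle (by rw [hgen]; trivial)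
            exact Subgroup.mem_centralizer_iff.1 hk g rfl
          have hsq : ∀ g : G, g * g = 1 := by
            intro g
            have hg : g ∈ Subgroup.closure S₀ := by rw [hgen]; trivial
            induction hg using Subgroup.closure_induction with
            | mem y hy => exact hord y hy
            | one => simp
            | mul y z hy hz ihy ihz =>
              have hyz : (y * z) * (y * z) = (y * y) * (z * z) := by
                rw [show (y * z) * (y * z) = y * (z * y) * z by group, h2 z y]
                group
              rw [hyz, ihy, ihz, one_mul]
            | inv y hy ihy =>
              rw [← mul_inv_rev, ihy, inv_one]
          exact hxx (inv_eq_of_mul_eq_one_left (hsq x))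
        · -- non-abelian: take a non-commuting pair of generators
          push_neg at hab
          obtain ⟨u, hu, v, hv, huv⟩ := hab
          have hp2 : wdist S₀ 1 (u * v) ≤ 2 := by
            have h6 := hword [u, v] (by
              intro s hs; simp at hs; rcases hs with rfl | rfl; exacts [hu, hv])
            simpa using h6
          have hpfix : ψ (u * v) = u * v := IH (wdist S₀ 1 (u * v)) (by omega) _ rfl
          have hpx : u * v ≠ x := by
            intro h; rw [h] at hp2; omega
          rcases pair_lemma S₀ hfin hsym hgen hiso hpx with h | h | h
          · -- main battle: x has norm 3
            rw [hpfix, hpsix] at h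
            set t := (u * v)⁻¹ * x⁻¹ with htdef
            have htS : t ∈ S₀ := h
            have hxinv : x⁻¹ = u * (v * t) := by
              have h5 : (u * v) * t = x⁻¹ := by rw [htdef]; group
              rw [← h5]; group
            have hxeq : x = t * (v * u) := by
              rw [← inv_inv x, hxinv]
              simp only [mul_inv_rev, hinv' t htS, hinv' u hu, hinv' v hv]
              group
            have hle3 : wdist S₀ 1 x ≤ 3 := by
              have h6 := hword [t, v, u] (by
                intro s hs; simp at hs; rcases hs with rfl | rfl | rfl; exacts [htS, hv, hu])
              simpa [← hxeq] using h6
            have hn0 : n = 0 := by omega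
            subst hn0
            have hPfix : ψ (t * v) = t * v := by
              refine IH (wdist S₀ 1 (t * v)) ?_ _ rfl
              have h6 := hword [t, v] (by
                intro s hs; simp at hs; rcases hs with rfl | rfl; exacts [htS, hv])
              simp at h6
              omega
            have hPx : t * v ≠ x := by
              intro hP
              have h6 := hword [t, v] (by
                intro s hs; simp at hs; rcases hs with rfl | rfl; exacts [htS, hv])
              simp only [List.prod_cons, List.prod_nil, mul_one, List.length_cons,
                List.length_nil] at h6
              rw [hP] at h6
              omega
            have hPinvx : (t * v)⁻¹ * x = u := by rw [hxeq]; group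
            rcases pair_lemma S₀ hfin hsym hgen hiso hPx with h' | h' | h'
            · rw [hPfix, hpsix] at h'
              set q := (t * v)⁻¹ * x⁻¹ with hqdef
              have hqS : q ∈ S₀ := h'
              have hxinv2 : x⁻¹ = (t * v) * q := by rw [hqdef]; group
              have hxeq2 : x = q * (v * t) := by
                rw [← inv_inv x, hxinv2]
                simp only [mul_inv_rev, hinv' q hqS, hinv' v hv, hinv' t htS]
              by_cases hqt : q = t
              · -- then t = u and x is an involution: contradiction
                have he : q * (v * t) = t * (v * u) := by rw [← hxeq2, hxeq]
                rw [hqt] at he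
                have htu2 : t = u := mul_left_cancel (mul_left_cancel he)
                apply hxx
                have hxeq3 : x = t * (v * t) := by rw [hxeq, ← htu2]
                have hxx1 : x * x = 1 := by
                  rw [hxeq3,
                    show t * (v * t) * (t * (v * t)) = t * (v * ((t * t) * (v * t))) by group,
                    hord t htS, one_mul,
                    show t * (v * (v * t)) = t * ((v * v) * t) by group,
                    hord v hv, one_mul, hord t htS]
                exact inv_eq_of_mul_eq_one_left hxx1
              · by_cases hqv : q = v
                · have hxt : x = t := by
                    rw [hxeq2, hqv, ← mul_assoc, hord v hv, one_mul]
                  exact hxU (hxt ▸ htS)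
                · by_cases hqu : q = u
                  · exact hxx (by rw [hxinv, ← hqu, ← hxeq2])
                  · -- minimality contradiction: q is a redundant generator
                    have hqexp : q = v * (t * (u * (v * t))) := by
                      rw [hqdef, hxinv, mul_inv_rev, hinv' t htS, hinv' v hv]
                      group
                    have h1m : t ∈ S₀ \ {q} := ⟨htS, fun hh => hqt (by rw [hh])⟩
                    have h2m : v ∈ S₀ \ {q} := ⟨hv, fun hh => hqv (by rw [hh])⟩
                    have h3m : u ∈ S₀ \ {q} := ⟨hu, fun hh => hqu (by rw [hh])⟩
                    exact redundant_gen hgen hmin hqS hqexp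
                      (mul_mem (Subgroup.subset_closure h2m)
                        (mul_mem (Subgroup.subset_closure h1m)
                          (mul_mem (Subgroup.subset_closure h3m)
                            (mul_mem (Subgroup.subset_closure h2m)
                              (Subgroup.subset_closure h1m)))))
            · rw [hPfix, hpsix] at h'
              exact absurd (mul_left_cancel h') hxx
            · rw [hPfix, hpsix, hPinvx] at h'
              apply hxx
              have h8 : x⁻¹ = (t * v) * u⁻¹ := by rw [← h']; group
              rw [h8, hinv' u hu, hxeq]
              group
          · rw [hpfix, hpsix] at h
            exact absurd (mul_left_cancel h) hxx
          · rw [hpfix, hpsix] at h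
            -- h : (u*v)⁻¹ * x⁻¹ = ((u*v)⁻¹ * x)⁻¹
            have hkey : x⁻¹ * (u * v) = ((u * v)⁻¹ * x)⁻¹ := by group
            rw [← hkey] at h
            -- h : (u*v)⁻¹ * x⁻¹ = x⁻¹ * (u*v)
            have hc1 : x * (u * v) = (u * v) * x := by
              rw [← mul_assoc, hcent u hu, mul_assoc, hcent v hv, ← mul_assoc]
            have hcm : Commute x (u * v) := hc1
            have hc2 : x⁻¹ * (u * v) = (u * v) * x⁻¹ := hcm.inv_left
            rw [hc2] at h
            have h9 : (u * v)⁻¹ = u * v := mul_right_cancel h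
            apply huv
            rw [← h9, mul_inv_rev, hinv' u hu, hinv' v hv]
  intro x
  exact main (wdist S₀ 1 x) x rfl


end SharedIsomCore

/-- If `G` has a minimal finite symmetric generating system all of
whose elements have order 2, then every shared isometry for the family of all finite
symmetric generating systems is a left translation, and the group of shared isometries
is isomorphic to `G`. -/
theorem shared_isometries_order_two {G : Type*} [Group G] [Group.FG G]
    (S₀ : Set G) (hfin : S₀.Finite) (hsym : S₀⁻¹ = S₀)
    (hgen : Subgroup.closure S₀ = ⊤)
    (hmin : ∀ T : Set G, T ⊂ S₀ → Subgroup.closure T ≠ ⊤)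
    (hord : ∀ s ∈ S₀, s * s = 1) :
    (∀ φ : G → G, Function.Bijective φ →
      (∀ S : Set G, S.Finite → S⁻¹ = S → Subgroup.closure S = ⊤ →
        ∀ x y : G, wdist S (φ x) (φ y) = wdist S x y) →
      ∃ c : G, ∀ x : G, φ x = c * x) ∧
    Nonempty (G ≃* sharedIsomGroup (symGenFamily G) wdist) := by
  have hpart1 : ∀ φ : G → G, Function.Bijective φ →
      (∀ S : Set G, S.Finite → S⁻¹ = S → Subgroup.closure S = ⊤ →
        ∀ x y : G, wdist S (φ x) (φ y) = wdist S x y) →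
      ∃ c : G, ∀ x : G, φ x = c * x := by
    intro φ hbij hiso
    set c := φ 1 with hc
    set ψ : G → G := fun x => c⁻¹ * φ x with hψ
    have hψbij : Function.Bijective ψ := (Equiv.mulLeft c⁻¹).bijective.comp hbij
    have hψ1 : ψ 1 = 1 := by simp [hψ, hc]
    have hψiso : ∀ S : Set G, S.Finite → S⁻¹ = S → Subgroup.closure S = ⊤ →
        ∀ x y : G, wdist S (ψ x) (ψ y) = wdist S x y := by
      intro S h1 h2 h3 x y
      show wdist S (c⁻¹ * φ x) (c⁻¹ * φ y) = wdist S x y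
      rw [wdist_mul_left, hiso S h1 h2 h3]
    have hfix := core_fix S₀ hfin hsym hgen hmin hord hψbij hψ1 hψiso
    refine ⟨c, fun x => ?_⟩
    have hx : c⁻¹ * φ x = x := hfix x
    calc φ x = c * (c⁻¹ * φ x) := by group
    _ = c * x := by rw [hx]
  refine ⟨hpart1, ⟨?_⟩⟩
  have hmem : ∀ c : G, Equiv.mulLeft c ∈ sharedIsomGroup (symGenFamily G) wdist := by
    intro c S hS x y
    simp only [Equiv.coe_mulLeft]
    exact wdist_mul_left S c x y
  let f : G →* sharedIsomGroup (symGenFamily G) wdist :=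
    { toFun := fun c => ⟨Equiv.mulLeft c, hmem c⟩
      map_one' := by
        ext z
        simp
      map_mul' := by
        intro c d
        ext z
        simp [Equiv.mulLeft_mul] }
  refine MulEquiv.ofBijective f ⟨?_, ?_⟩
  · intro c d hcd
    have h1 : (Equiv.mulLeft c : G → G) 1 = (Equiv.mulLeft d : G → G) 1 := by
      rw [show Equiv.mulLeft c = ((f c : Equiv.Perm G)) from rfl,
        show Equiv.mulLeft d = ((f d : Equiv.Perm G)) from rfl, hcd]
    simpa using h1
  · rintro ⟨φ, hφ⟩
    have hφiso : ∀ S : Set G, S.Finite → S⁻¹ = S → Subgroup.closure S = ⊤ →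
        ∀ x y : G, wdist S (φ x) (φ y) = wdist S x y := by
      intro S h1 h2 h3 x y
      exact hφ S ⟨h1, h2, h3⟩ x y
    obtain ⟨c, hcφ⟩ := hpart1 φ φ.bijective hφiso
    refine ⟨c, ?_⟩
    apply Subtype.ext
    apply Equiv.ext
    intro z
    simp only [Equiv.coe_mulLeft]
    exact (hcφ z).symm
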